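/- Let f be a real-valued function on {0,1}^n obtained from g by a downward shift in direction i: for each adjacent pair x,y with x_i = 0, y_i = 1, set f(x) = max{g(x),g(y)} and f(y) = min{g(x),g(y)}. Then E(f,f) ≤ E(g,g), where E(h,h) = E_x ∑_{y∼x}(h(x)−h(y))². -/

import Mathlib

open Finset

namespace ShiftAux

variable {n : ℕ}

/-- Flip coordinate `j`. -/
def bflip (j : Fin n) (x : Fin n → Bool) : Fin n → Bool := Function.update x j (!(x j))

lemma flip_apply_self (j : Fin n) (x : Fin n → Bool) : bflip j x j = !(x j) := by
  simp [bflip]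

lemma flip_apply_ne (j k : Fin n) (x : Fin n → Bool) (h : k ≠ j) : bflip j x k = x k := by
  simp [bflip, Function.update_of_ne h]

lemma flip_flip (j : Fin n) (x : Fin n → Bool) : bflip j (bflip j x) = x := by
  funext k
  by_cases h : k = j
  · subst h; simp [bflip]
  · rw [flip_apply_ne _ _ _ h, flip_apply_ne _ _ _ h]

lemma flip_comm {j i : Fin n} (h : j ≠ i) (x : Fin n → Bool) :
    bflip j (bflip i x) = bflip i (bflip j x) := by
  funext k
  rcases eq_or_ne k j with rfl | hkj
  · rw [flip_apply_self, flip_apply_ne _ _ _ h, flip_apply_ne _ _ _ h, flip_apply_self]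
  · rcases eq_or_ne k i with rfl | hki
    · rw [flip_apply_ne _ _ _ (Ne.symm h), flip_apply_self, flip_apply_self,
        flip_apply_ne _ _ _ (Ne.symm h)]
    · rw [flip_apply_ne _ _ _ hkj, flip_apply_ne _ _ _ hki,
        flip_apply_ne _ _ _ hki, flip_apply_ne _ _ _ hkj]

lemma update_true_eq_flip {i : Fin n} {x : Fin n → Bool} (hx : x i = false) :
    Function.update x i true = bflip i x := by
  simp [bflip, hx]

lemma update_false_eq_flip {i : Fin n} {x : Fin n → Bool} (hx : x i = true) :
    Function.update x i false = bflip i x := by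
  simp [bflip, hx]

lemma adj_eq_image (x : Fin n → Bool) :
    (univ.filter fun y => (univ.filter fun j => x j ≠ y j).card = 1) =
      univ.image (fun j => bflip j x) := by
  ext y
  simp only [mem_filter, mem_univ, true_and, mem_image]
  constructor
  · intro h
    obtain ⟨j, hj⟩ := Finset.card_eq_one.mp h
    refine ⟨j, ?_⟩
    funext k
    by_cases hk : k = j
    · subst hk
      have hkmem : k ∈ (univ.filter fun j => x j ≠ y j) := by rw [hj]; exact mem_singleton_self k
      have : x k ≠ y k := (mem_filter.mp hkmem).2
      rw [flip_apply_self]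
      revert this; cases x k <;> cases y k <;> simp
    · have : k ∉ (univ.filter fun j => x j ≠ y j) := by rw [hj]; simp [hk]
      have hxy : ¬ x k ≠ y k := fun h' => this (mem_filter.mpr ⟨mem_univ _, h'⟩)
      rw [flip_apply_ne _ _ _ hk]
      exact not_not.mp hxy
  · rintro ⟨j, rfl⟩
    have : (univ.filter fun k => x k ≠ bflip j x k) = {j} := by
      ext k
      simp only [mem_filter, mem_univ, true_and, mem_singleton]
      constructor
      · intro hk
        by_contra hkj
        exact hk (flip_apply_ne _ _ _ hkj).symm
      · rintro rfl
        rw [flip_apply_self]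
        cases x k <;> simp
    rw [this, card_singleton]

lemma flip_injective (x : Fin n → Bool) : Function.Injective (fun j => bflip j x) := by
  intro j k h
  by_contra hjk
  have h1 : bflip j x j = bflip k x j := congrFun h j
  rw [flip_apply_self, flip_apply_ne _ _ _ hjk] at h1
  cases x j <;> simp_all

lemma sum_adj (F : (Fin n → Bool) → ℝ) (x : Fin n → Bool) :
    ∑ y ∈ univ.filter (fun y => (univ.filter fun j => x j ≠ y j).card = 1), F y =
      ∑ j : Fin n, F (bflip j x) := by
  rw [adj_eq_image, sum_image (fun a _ b _ h => flip_injective x h)]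

/-- Key rearrangement inequality. -/
lemma key (a b c d : ℝ) :
    (max a b - max c d) ^ 2 + (min a b - min c d) ^ 2 ≤ (a - c) ^ 2 + (b - d) ^ 2 := by
  rcases le_total a b with h1 | h1 <;> rcases le_total c d with h2 | h2 <;>
    simp [max_eq_right, max_eq_left, min_eq_left, min_eq_right, h1, h2] <;> nlinarith

lemma sum_flip (i : Fin n) (T : (Fin n → Bool) → ℝ) :
    ∑ x : Fin n → Bool, T (bflip i x) = ∑ x : Fin n → Bool, T x :=
  Fintype.sum_equiv ⟨bflip i, bflip i, flip_flip i, flip_flip i⟩ _ _ (fun _ => rfl)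

end ShiftAux

open ShiftAux

/-- A downward shift in direction `i` does not increase the Dirichlet form:
if `f` puts, on each edge in direction `i`, the larger of the two values of `g` on the
endpoint with `i`-th coordinate `0`, then `E(f,f) ≤ E(g,g)`. -/
theorem shift_decreases_dirichlet (n : ℕ) (i : Fin n) (g f : (Fin n → Bool) → ℝ)
    (hf : ∀ x : Fin n → Bool,
      (x i = false → f x = max (g x) (g (Function.update x i true))) ∧
      (x i = true → f x = min (g (Function.update x i false)) (g x))) :
    (1 / (2 : ℝ) ^ n) *
        ∑ x : Fin n → Bool, ∑ y ∈ univ.filter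
            (fun y => (univ.filter fun j => x j ≠ y j).card = 1), (f x - f y) ^ 2 ≤
      (1 / (2 : ℝ) ^ n) *
        ∑ x : Fin n → Bool, ∑ y ∈ univ.filter
            (fun y => (univ.filter fun j => x j ≠ y j).card = 1), (g x - g y) ^ 2 := by
  -- values of f on i-edges
  have hmax : ∀ x : Fin n → Bool, x i = false → f x = max (g x) (g (bflip i x)) := by
    intro x hx
    rw [(hf x).1 hx, update_true_eq_flip hx]
  have hmin : ∀ x : Fin n → Bool, x i = true → f x = min (g (bflip i x)) (g x) := by
    intro x hx
    rw [(hf x).2 hx, update_false_eq_flip hx]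
  apply mul_le_mul_of_nonneg_left _ (by positivity)
  simp only [sum_adj]
  conv_lhs => rw [Finset.sum_comm]
  conv_rhs => rw [Finset.sum_comm]
  apply Finset.sum_le_sum
  intro j _
  rcases eq_or_ne j i with rfl | hj
  · -- direction i: equality termwise
    apply le_of_eq
    apply Finset.sum_congr rfl
    intro x _
    cases hx : x j
    · have hx' : (bflip j x) j = true := by rw [flip_apply_self, hx]; rfl
      rw [hmax x hx, hmin _ hx', ShiftAux.flip_flip]
      rcases le_total (g x) (g (bflip j x)) with h | h
      · rw [max_eq_right h, min_eq_left h]; ring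
      · rw [max_eq_left h, min_eq_right h]
    · have hx' : (bflip j x) j = false := by rw [flip_apply_self, hx]; rfl
      rw [hmin x hx, hmax _ hx', ShiftAux.flip_flip]
      rcases le_total (g (bflip j x)) (g x) with h | h
      · rw [min_eq_left h, max_eq_right h]; ring
      · rw [min_eq_right h, max_eq_left h]
  · -- direction j ≠ i
    have hTf : ∀ x : Fin n → Bool,
        (f x - f (bflip j x)) ^ 2 + (f (bflip i x) - f (bflip j (bflip i x))) ^ 2 ≤
        (g x - g (bflip j x)) ^ 2 + (g (bflip i x) - g (bflip j (bflip i x))) ^ 2 := by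
      intro x
      have hyi : (bflip j x) i = x i := flip_apply_ne _ _ _ (Ne.symm hj)
      have hxi' : (bflip i x) i = !(x i) := flip_apply_self i x
      have hcomm : bflip j (bflip i x) = bflip i (bflip j x) := flip_comm hj x
      have hyi' : (bflip j (bflip i x)) i = !(x i) := by
        rw [hcomm, flip_apply_self, hyi]
      cases hx : x i
      · -- x i = false
        rw [hmax x hx, hmax _ (by rw [hyi, hx]),
          hmin _ (by rw [hxi', hx]; rfl), hmin _ (by rw [hyi', hx]; rfl),
          ShiftAux.flip_flip, hcomm, ShiftAux.flip_flip]
        exact key (g x) (g (bflip i x)) (g (bflip j x)) (g (bflip i (bflip j x)))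
      · -- x i = true
        rw [hmin x hx, hmin _ (by rw [hyi, hx]),
          hmax _ (by rw [hxi', hx]; rfl), hmax _ (by rw [hyi', hx]; rfl),
          ShiftAux.flip_flip, hcomm, ShiftAux.flip_flip]
        have := key (g (bflip i x)) (g x) (g (bflip i (bflip j x))) (g (bflip j x))
        linarith [this]
    have h2 : ∑ x : Fin n → Bool,
        ((f x - f (bflip j x)) ^ 2 + (f (bflip i x) - f (bflip j (bflip i x))) ^ 2) ≤
        ∑ x : Fin n → Bool,
        ((g x - g (bflip j x)) ^ 2 + (g (bflip i x) - g (bflip j (bflip i x))) ^ 2) :=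
      Finset.sum_le_sum fun x _ => hTf x
    rw [Finset.sum_add_distrib, Finset.sum_add_distrib,
      sum_flip i (fun x => (f x - f (bflip j x)) ^ 2),
      sum_flip i (fun x => (g x - g (bflip j x)) ^ 2)] at h2
    linarith
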